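/- The principal value integral ∫₀^∞ √t · (1/(t−λ) − 1/t) dt equals 0 for any λ > 0, where the principal value is taken with respect to the singularity at t = λ. -/

import Mathlib

open MeasureTheory Filter Set

noncomputable def pvF (lam : ℝ) (t : ℝ) : ℝ :=
  Real.sqrt lam *
    (Real.log (Real.sqrt t - Real.sqrt lam) - Real.log (Real.sqrt t + Real.sqrt lam))

lemma sqrt_sub_ne (lam : ℝ) (hlam : 0 < lam) {t : ℝ} (ht : t ≠ lam) :
    Real.sqrt t - Real.sqrt lam ≠ 0 := by
  rw [sub_ne_zero]
  intro h
  rcases lt_or_ge t 0 with h0 | h0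
  · rw [Real.sqrt_eq_zero_of_nonpos h0.le] at h
    exact (Real.sqrt_pos.2 hlam).ne h
  · exact ht (by rw [← Real.sq_sqrt h0, ← Real.sq_sqrt hlam.le, h])

lemma sqrt_add_pos (lam : ℝ) (hlam : 0 < lam) (t : ℝ) :
    0 < Real.sqrt t + Real.sqrt lam :=
  add_pos_of_nonneg_of_pos (Real.sqrt_nonneg t) (Real.sqrt_pos.2 hlam)

lemma pvF_hasDerivAt (lam : ℝ) (hlam : 0 < lam) {t : ℝ} (ht : 0 < t) (htl : t ≠ lam) :
    HasDerivAt (pvF lam) (Real.sqrt t * (1 / (t - lam) - 1 / t)) t := by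
  have hst : (0:ℝ) < Real.sqrt t := Real.sqrt_pos.2 ht
  have h1 : Real.sqrt t - Real.sqrt lam ≠ 0 := sqrt_sub_ne lam hlam htl
  have h2 : Real.sqrt t + Real.sqrt lam ≠ 0 := (sqrt_add_pos lam hlam t).ne'
  have hs : HasDerivAt Real.sqrt (1 / (2 * Real.sqrt t)) t := Real.hasDerivAt_sqrt ht.ne'
  have hA := ((hs.sub_const (Real.sqrt lam)).log h1)
  have hB := ((hs.add_const (Real.sqrt lam)).log h2)
  have h := (hA.sub hB).const_mul (Real.sqrt lam)
  refine h.congr_deriv ?_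
  symm
  have ha2 : Real.sqrt t ^ 2 = t := Real.sq_sqrt ht.le
  have hb2 : Real.sqrt lam ^ 2 = lam := Real.sq_sqrt hlam.le
  have htl' : t - lam ≠ 0 := sub_ne_zero.2 htl
  field_simp
  ring_nf
  rw [hb2]
  linear_combination (2 * lam * (Real.sqrt t ^ 2 + t) - 2 * lam ^ 2) * ha2

lemma pvF_continuousAt (lam : ℝ) (hlam : 0 < lam) {t : ℝ} (ht : t ≠ lam) :
    ContinuousAt (pvF lam) t := by
  have h1 : Real.sqrt t - Real.sqrt lam ≠ 0 := sqrt_sub_ne lam hlam ht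
  have h2 : Real.sqrt t + Real.sqrt lam ≠ 0 := (sqrt_add_pos lam hlam t).ne'
  have hc : ContinuousAt Real.sqrt t := Real.continuous_sqrt.continuousAt
  have hca : ContinuousAt (fun x : ℝ => Real.sqrt x - Real.sqrt lam) t :=
    hc.sub continuousAt_const
  have hcb : ContinuousAt (fun x : ℝ => Real.sqrt x + Real.sqrt lam) t :=
    hc.add continuousAt_const
  exact continuousAt_const.mul ((hca.log h1).sub (hcb.log h2))

lemma pvF_zero (lam : ℝ) : pvF lam 0 = 0 := by
  simp [pvF, Real.sqrt_zero, zero_sub, Real.log_neg_eq_log]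

lemma pvF_tendsto_atTop (lam : ℝ) (hlam : 0 < lam) :
    Tendsto (pvF lam) atTop (nhds 0) := by
  have hsq : Tendsto Real.sqrt atTop atTop :=
    (tendsto_rpow_atTop (by norm_num : (0:ℝ) < 1/2)).congr
      (fun x => (Real.sqrt_eq_rpow x).symm)
  have hden : Tendsto (fun t => Real.sqrt t + Real.sqrt lam) atTop atTop :=
    hsq.atTop_add tendsto_const_nhds
  have h0 : Tendsto (fun t => 2 * Real.sqrt lam / (Real.sqrt t + Real.sqrt lam))
      atTop (nhds 0) := tendsto_const_nhds.div_atTop hden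
  have hr : Tendsto (fun t => (Real.sqrt t - Real.sqrt lam) / (Real.sqrt t + Real.sqrt lam))
      atTop (nhds 1) := by
    have := (tendsto_const_nhds (x := (1:ℝ)) (f := atTop)).sub h0
    rw [sub_zero] at this
    refine this.congr fun t => ?_
    have h2 : Real.sqrt t + Real.sqrt lam ≠ 0 := (sqrt_add_pos lam hlam t).ne'
    field_simp
    ring
  have hlog : Tendsto (fun t => Real.log
      ((Real.sqrt t - Real.sqrt lam) / (Real.sqrt t + Real.sqrt lam))) atTop (nhds 0) := by
    have := ((Real.continuousAt_log one_ne_zero).tendsto.comp hr)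
    simpa [Function.comp_def] using this
  have := hlog.const_mul (Real.sqrt lam)
  rw [mul_zero] at this
  refine this.congr' ?_
  filter_upwards [eventually_gt_atTop lam] with t htlam
  have hpos : 0 < Real.sqrt t - Real.sqrt lam := by
    rw [sub_pos]
    exact Real.sqrt_lt_sqrt hlam.le htlam
  rw [pvF, Real.log_div hpos.ne' (sqrt_add_pos lam hlam t).ne']

/-- Inner integral computation. -/
lemma inner_integral (lam : ℝ) (hlam : 0 < lam) {ε : ℝ} (hε : 0 < ε) (hεl : ε < lam) :
    (∫ t in Set.Ioo (0:ℝ) (lam - ε), Real.sqrt t * (1 / (t - lam) - 1 / t))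
      = pvF lam (lam - ε) := by
  have hb : 0 < lam - ε := by linarith
  -- integrability
  have hint : IntegrableOn (fun t => Real.sqrt t * (1 / (t - lam) - 1 / t))
      (Ioc 0 (lam - ε)) := by
    have hg : IntegrableOn (fun t : ℝ => lam / ε * t ^ (-(1/2) : ℝ)) (Ioc 0 (lam - ε)) := by
      have := (intervalIntegral.intervalIntegrable_rpow' (a := 0) (b := lam - ε)
        (r := -(1/2)) (by norm_num)).const_mul (lam / ε)
      rwa [intervalIntegrable_iff_integrableOn_Ioc_of_le hb.le] at this
    refine hg.mono' ?_ ?_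
    · refine (ContinuousOn.aestronglyMeasurable ?_ measurableSet_Ioc)
      intro t ht
      have ht0 : (0:ℝ) < t := ht.1
      have htl : t - lam ≠ 0 := by intro h; have := ht.2; nlinarith [sub_eq_zero.1 h]
      exact ContinuousAt.continuousWithinAt <| by
        exact (Real.continuous_sqrt.continuousAt).mul
          (((continuousAt_const.div (continuousAt_id.sub continuousAt_const) htl)).sub
            (continuousAt_const.div continuousAt_id ht0.ne'))
    · rw [ae_restrict_iff' measurableSet_Ioc]
      filter_upwards with t ht
      have ht0 : (0:ℝ) < t := ht.1
      have hst : (0:ℝ) < Real.sqrt t := Real.sqrt_pos.2 ht0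
      have htlt : t < lam := lt_of_le_of_lt ht.2 (by linarith)
      have hlt : 0 < lam - t := by linarith
      have heq : Real.sqrt t * (1 / (t - lam) - 1 / t)
          = -(lam / (Real.sqrt t * (lam - t))) := by
        have ha2 : Real.sqrt t * Real.sqrt t = t := Real.mul_self_sqrt ht0.le
        have h1 : t - lam ≠ 0 := by linarith
        field_simp
        ring_nf
        linear_combination (lam ^ 2 - lam * t) * ha2
      have hrp : t ^ (-(1/2) : ℝ) = 1 / Real.sqrt t := by
        rw [Real.rpow_neg ht0.le, ← Real.sqrt_eq_rpow, one_div]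
      rw [heq, norm_neg, Real.norm_eq_abs, hrp, abs_of_pos (by positivity)]
      rw [div_le_iff₀ (by positivity)]
      have hεle : ε ≤ lam - t := by have := ht.2; linarith
      calc lam = lam / ε * ε := by field_simp
        _ ≤ lam / ε * (lam - t) := by
            apply mul_le_mul_of_nonneg_left hεle (by positivity)
        _ = lam / ε * (1 / Real.sqrt t) * (Real.sqrt t * (lam - t)) := by
            field_simp
  have hFTC : ∫ t in (0:ℝ)..(lam - ε), Real.sqrt t * (1 / (t - lam) - 1 / t)
      = pvF lam (lam - ε) - pvF lam 0 := by
    apply intervalIntegral.integral_eq_sub_of_hasDeriv_right_of_le hb.le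
    · intro t ht
      exact (pvF_continuousAt lam hlam (by rcases ht with ⟨_, h2⟩; intro h; simp_all; linarith)).continuousWithinAt
    · intro t ht
      exact (pvF_hasDerivAt lam hlam ht.1 (by intro h; rcases ht with ⟨_, h2⟩; nlinarith)).hasDerivWithinAt
    · rwa [intervalIntegrable_iff_integrableOn_Ioc_of_le hb.le]
  rw [← integral_Ioc_eq_integral_Ioo, ← intervalIntegral.integral_of_le hb.le, hFTC,
    pvF_zero, sub_zero]

/-- Outer integral computation. -/
lemma outer_integral (lam : ℝ) (hlam : 0 < lam) {ε : ℝ} (hε : 0 < ε) :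
    (∫ t in Set.Ioi (lam + ε), Real.sqrt t * (1 / (t - lam) - 1 / t))
      = -pvF lam (lam + ε) := by
  have h : ∫ t in Set.Ioi (lam + ε), Real.sqrt t * (1 / (t - lam) - 1 / t)
      = 0 - pvF lam (lam + ε) := by
    apply integral_Ioi_of_hasDerivAt_of_nonneg'
    · intro x hx
      have hx1 : lam + ε ≤ x := hx
      exact pvF_hasDerivAt lam hlam (by linarith) (by intro h; rw [h] at hx1; linarith)
    · intro x hx
      have hx1 : lam + ε < x := hx
      have hxl : 0 < x - lam := by linarith
      have hx0 : 0 < x := by linarith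
      apply mul_nonneg (Real.sqrt_nonneg x)
      rw [sub_nonneg]
      apply one_div_le_one_div_of_le hxl (by linarith)
    · exact pvF_tendsto_atTop lam hlam
  rw [h, zero_sub]

/-- Key algebraic identity for the sum. -/
lemma pvF_diff (lam : ℝ) (hlam : 0 < lam) {ε : ℝ} (hε : 0 < ε) (hεl : ε < lam) :
    pvF lam (lam - ε) - pvF lam (lam + ε)
      = 2 * Real.sqrt lam *
        (Real.log (Real.sqrt (lam + ε) + Real.sqrt lam)
          - Real.log (Real.sqrt (lam - ε) + Real.sqrt lam)) := by
  have hb : (0:ℝ) < lam - ε := by linarith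
  have hc : (0:ℝ) < lam + ε := by linarith
  set d := Real.sqrt (lam - ε) + Real.sqrt lam with hd_def
  set e := Real.sqrt (lam + ε) + Real.sqrt lam with he_def
  have hd : 0 < d := sqrt_add_pos lam hlam _
  have he : 0 < e := sqrt_add_pos lam hlam _
  have h1 : Real.sqrt (lam - ε) - Real.sqrt lam = -(ε / d) := by
    rw [← neg_div, eq_div_iff hd.ne']
    have a1 : Real.sqrt (lam - ε) ^ 2 = lam - ε := Real.sq_sqrt hb.le
    have a2 : Real.sqrt lam ^ 2 = lam := Real.sq_sqrt hlam.le
    linear_combination a1 - a2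
  have h2 : Real.sqrt (lam + ε) - Real.sqrt lam = ε / e := by
    rw [eq_div_iff he.ne']
    have a1 : Real.sqrt (lam + ε) ^ 2 = lam + ε := Real.sq_sqrt hc.le
    have a2 : Real.sqrt lam ^ 2 = lam := Real.sq_sqrt hlam.le
    linear_combination a1 - a2
  have l1 : Real.log (Real.sqrt (lam - ε) - Real.sqrt lam) = Real.log ε - Real.log d := by
    rw [h1, Real.log_neg_eq_log, Real.log_div hε.ne' hd.ne']
  have l2 : Real.log (Real.sqrt (lam + ε) - Real.sqrt lam) = Real.log ε - Real.log e := by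
    rw [h2, Real.log_div hε.ne' he.ne']
  rw [pvF, pvF, l1, l2]
  ring

theorem pv_integral_sqrt_eq_zero (lam : ℝ) (hlam : 0 < lam) :
    Tendsto
      (fun ε : ℝ =>
        (∫ t in Set.Ioo (0:ℝ) (lam - ε), Real.sqrt t * (1 / (t - lam) - 1 / t)) +
        ∫ t in Set.Ioi (lam + ε), Real.sqrt t * (1 / (t - lam) - 1 / t))
      (nhdsWithin 0 (Set.Ioi 0)) (nhds 0) := by
  set G : ℝ → ℝ := fun ε => 2 * Real.sqrt lam *
    (Real.log (Real.sqrt (lam + ε) + Real.sqrt lam)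
      - Real.log (Real.sqrt (lam - ε) + Real.sqrt lam)) with hG_def
  have hGtendsto : Tendsto G (nhdsWithin 0 (Set.Ioi 0)) (nhds 0) := by
    have hcont : ContinuousAt G 0 := by
      have hc1 : ContinuousAt (fun ε : ℝ => Real.sqrt (lam + ε) + Real.sqrt lam) 0 :=
        ((Real.continuous_sqrt.comp (continuous_const.add continuous_id)).continuousAt).add
          continuousAt_const
      have hc2 : ContinuousAt (fun ε : ℝ => Real.sqrt (lam - ε) + Real.sqrt lam) 0 :=
        ((Real.continuous_sqrt.comp (continuous_const.sub continuous_id)).continuousAt).add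
          continuousAt_const
      have hne : Real.sqrt (lam + 0) + Real.sqrt lam ≠ 0 := by
        rw [add_zero]; exact (by positivity : (0:ℝ) < Real.sqrt lam + Real.sqrt lam).ne'
      have hne2 : Real.sqrt (lam - 0) + Real.sqrt lam ≠ 0 := by
        rw [sub_zero]; exact (by positivity : (0:ℝ) < Real.sqrt lam + Real.sqrt lam).ne'
      exact continuousAt_const.mul ((hc1.log hne).sub (hc2.log hne2))
    have hG0 : G 0 = 0 := by simp [hG_def]
    have := hcont.tendsto
    rw [hG0] at this
    exact this.mono_left nhdsWithin_le_nhds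
  refine hGtendsto.congr' ?_
  have hmem : Set.Ioo (0:ℝ) lam ∈ nhdsWithin 0 (Set.Ioi 0) :=
    Ioo_mem_nhdsGT_of_mem (by constructor <;> simp [hlam])
  filter_upwards [hmem] with ε hε
  rw [inner_integral lam hlam hε.1 hε.2, outer_integral lam hlam hε.1]
  rw [← sub_eq_add_neg, pvF_diff lam hlam hε.1 hε.2]
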